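/- For all real a > 0 and integer b ≥ 1, the function f(t) = ∫₀ᵗ e^{−a x} x^b dx − e^{−a t} t^{b+1} is decreasing on [0, b/a] and increasing on [b/a, ∞), with f(0) = 0 and lim_{t→∞} f(t) = Γ(b+1)/a^{b+1} > 0. -/

import Mathlib

open Filter Topology MeasureTheory intervalIntegral

theorem f_monotonicity (a : ℝ) (ha : 0 < a) (b : ℕ) (hb : 1 ≤ b) :
    AntitoneOn (fun t : ℝ =>
        (∫ x in Set.Icc (0:ℝ) t, Real.exp (-a * x) * x ^ b) -
          Real.exp (-a * t) * t ^ (b + 1)) (Set.Icc 0 (b / a)) ∧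
    MonotoneOn (fun t : ℝ =>
        (∫ x in Set.Icc (0:ℝ) t, Real.exp (-a * x) * x ^ b) -
          Real.exp (-a * t) * t ^ (b + 1)) (Set.Ici ((b : ℝ) / a)) ∧
    ((∫ x in Set.Icc (0:ℝ) (0:ℝ), Real.exp (-a * x) * x ^ b) -
        Real.exp (-a * 0) * (0:ℝ) ^ (b + 1) = 0) ∧
    Tendsto (fun t : ℝ =>
        (∫ x in Set.Icc (0:ℝ) t, Real.exp (-a * x) * x ^ b) -
          Real.exp (-a * t) * t ^ (b + 1)) atTop
      (𝓝 (Real.Gamma ((b : ℝ) + 1) / a ^ (b + 1))) ∧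
    0 < Real.Gamma ((b : ℝ) + 1) / a ^ (b + 1) := by
  set g : ℝ → ℝ := fun x => Real.exp (-a * x) * x ^ b with hg
  have hgc : Continuous g := by continuity
  set f : ℝ → ℝ := fun t =>
    (∫ x in Set.Icc (0:ℝ) t, g x) - Real.exp (-a * t) * t ^ (b + 1) with hf
  set f₀ : ℝ → ℝ := fun t =>
    (∫ x in (0:ℝ)..t, g x) - Real.exp (-a * t) * t ^ (b + 1) with hf₀
  have heq : Set.EqOn f f₀ (Set.Ici 0) := by
    intro t ht
    simp only [hf, hf₀]
    rw [MeasureTheory.integral_Icc_eq_integral_Ioc,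
      intervalIntegral.integral_of_le (Set.mem_Ici.mp ht)]
  have hderiv : ∀ t : ℝ, HasDerivAt f₀ (g t * (a * t - b)) t := by
    intro t
    have h1 : HasDerivAt (fun t => ∫ x in (0:ℝ)..t, g x) (g t) t :=
      (intervalIntegral.integral_hasDerivAt_right
        (hgc.intervalIntegrable 0 t)
        (hgc.stronglyMeasurableAtFilter _ _) hgc.continuousAt)
    have h2 : HasDerivAt (fun t : ℝ => Real.exp (-a * t) * t ^ (b + 1))
        (-a * Real.exp (-a * t) * t ^ (b + 1)
          + Real.exp (-a * t) * ((b + 1) * t ^ b)) t := by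
      have he : HasDerivAt (fun t : ℝ => Real.exp (-a * t)) (-a * Real.exp (-a * t)) t := by
        simpa [mul_comm] using (((hasDerivAt_id t).const_mul (-a)).exp)
      have hp : HasDerivAt (fun t : ℝ => t ^ (b + 1)) ((b + 1 : ℕ) * t ^ b) t := by
        simpa using hasDerivAt_pow (b + 1) t
      refine (he.mul hp).congr_deriv ?_
      push_cast
      ring
    have := h1.sub h2
    refine this.congr_deriv ?_
    simp only [hg]
    push_cast
    ring
  have hdiff : Differentiable ℝ f₀ := fun t => (hderiv t).differentiableAt
  have hderiv' : ∀ t, deriv f₀ t = g t * (a * t - b) := fun t => (hderiv t).deriv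
  have hbpos : (0:ℝ) < b := by exact_mod_cast Nat.lt_of_lt_of_le Nat.zero_lt_one hb
  have hba : 0 ≤ (b:ℝ) / a := by positivity
  -- Antitone part
  have hant : AntitoneOn f₀ (Set.Icc 0 ((b:ℝ) / a)) := by
    apply antitoneOn_of_deriv_nonpos (convex_Icc _ _) (hdiff.continuous.continuousOn)
      (fun t _ => (hdiff t).differentiableWithinAt)
    intro t ht
    rw [interior_Icc] at ht
    rw [hderiv']
    have h1 : 0 ≤ g t := by
      have := ht.1
      positivity
    have h2 : a * t - b ≤ 0 := by
      have := ht.2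
      have : a * t < b := by
        rw [lt_div_iff₀ ha] at this; linarith [this]
      linarith
    exact mul_nonpos_of_nonneg_of_nonpos h1 h2
  have hmono : MonotoneOn f₀ (Set.Ici ((b:ℝ) / a)) := by
    apply monotoneOn_of_deriv_nonneg (convex_Ici _) (hdiff.continuous.continuousOn)
      (fun t _ => (hdiff t).differentiableWithinAt)
    intro t ht
    rw [interior_Ici] at ht
    rw [hderiv']
    have htpos : 0 < t := lt_of_le_of_lt hba ht
    have h1 : 0 ≤ g t := by positivity
    have h2 : 0 ≤ a * t - b := by
      have : (b:ℝ) < t * a := (div_lt_iff₀ ha).mp ht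
      nlinarith
    exact mul_nonneg h1 h2
  -- limit
  have hint : IntegrableOn g (Set.Ioi 0) := by
    have := integrableOn_rpow_mul_exp_neg_mul_rpow (s := (b:ℝ)) (p := 1) (b := a)
      (by linarith) one_pos ha
    apply this.congr_fun ?_ measurableSet_Ioi
    intro x hx
    simp only [hg, Real.rpow_one]
    rw [Real.rpow_natCast]
    ring_nf
  have hF : Tendsto (fun t => ∫ x in (0:ℝ)..t, g x) atTop
      (𝓝 (Real.Gamma ((b:ℝ) + 1) / a ^ (b + 1))) := by
    have h := intervalIntegral_tendsto_integral_Ioi 0 hint tendsto_id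
    convert h using 2
    · rfl
    rw [show (∫ x in Set.Ioi (0:ℝ), g x)
        = ∫ x in Set.Ioi (0:ℝ), x ^ ((b:ℝ) + 1 - 1) * Real.exp (-(a * x)) from ?_]
    · rw [Real.integral_rpow_mul_exp_neg_mul_Ioi (by positivity) ha]
      rw [show ((b:ℝ) + 1) = ((b + 1 : ℕ) : ℝ) by push_cast; ring, Real.rpow_natCast]
      rw [div_eq_mul_inv, mul_comm, one_div, inv_pow]
    · refine setIntegral_congr_fun measurableSet_Ioi (fun x hx => ?_)
      simp only [hg, add_sub_cancel_right]
      rw [Real.rpow_natCast]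
      ring_nf
  have htail : Tendsto (fun t : ℝ => Real.exp (-a * t) * t ^ (b + 1)) atTop (𝓝 0) := by
    have h := (Real.tendsto_pow_mul_exp_neg_atTop_nhds_zero (b + 1)).comp
      (tendsto_id.const_mul_atTop ha)
    have : (fun t : ℝ => Real.exp (-a * t) * t ^ (b + 1))
        = fun t => (1 / a ^ (b+1)) * ((a * t) ^ (b + 1) * Real.exp (-(a * t))) := by
      funext t
      field_simp
      ring
    rw [this]
    simpa using (h.const_mul (1 / a ^ (b+1)))
  have hf₀lim : Tendsto f₀ atTop (𝓝 (Real.Gamma ((b:ℝ) + 1) / a ^ (b + 1))) := by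
    have := hF.sub htail
    rw [sub_zero] at this
    exact this
  refine ⟨?_, ?_, ?_, ?_, ?_⟩
  · intro x hx y hy hxy
    rw [heq hx.1, heq hy.1]
    exact hant hx hy hxy
  · intro x hx y hy hxy
    rw [heq (le_trans hba hx), heq (le_trans hba hy)]
    exact hmono hx hy hxy
  · simp
  · refine hf₀lim.congr' ?_
    filter_upwards [eventually_ge_atTop (0:ℝ)] with t ht
    exact (heq ht).symm
  · positivity
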